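/- Let N be a directed network with n vertices, integral edge capacities, a source s and a sink t, and suppose every edge capacity is at most k. Construct the network N* where each vertex v is replaced by sets of in-copies v_in(e,i) for each incoming edge e and i ∈ {1,...,capacity(e)}, and out-copies v_out(e',i') for each outgoing edge e', with an edge from every in-copy to every out-copy of v, and for each original edge e = (v,w) edges from v_out(e,i) to w_in(e,i); X consists of k new vertices each connected to all out-copies of s, and Y of k new vertices each reached from all in-copies of t. Then there is an integral flow of value k from s to t in N (routing each unit along a simple path) if and only if there are k pairwise vertex-disjoint simple directed paths connecting X to Y in N*. -/

import Mathlib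

set_option autoImplicit false

open scoped Classical

noncomputable section

variable {V : Type*}

/-- The vertices of the gadget network `N*`: copies `((v, e, i), b)` of a
vertex `v` of `N` (`b = false` for in-copies `v_in(e,i)`, `b = true` for
out-copies `v_out(e,i)`), together with `k` new source vertices (`Sum.inr
(Sum.inl _)`, the set `X`) and `k` new sink vertices (`Sum.inr (Sum.inr _)`,
the set `Y`). -/
def VStar (V : Type*) (k : ℕ) : Type _ := ((V × (V × V) × ℕ) × Bool) ⊕ (Fin k ⊕ Fin k)

attribute [reducible] VStar

/-- The edges of the gadget network `N*` built from the network `(E, cap)`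
with source `s` and sink `t`:
* from every in-copy of `v` to every out-copy of `v`;
* for each edge `e = (v, w)` and `i < cap e`, from `v_out(e, i)` to `w_in(e, i)`;
* from every new source vertex to every out-copy of `s`;
* from every in-copy of `t` to every new sink vertex. -/
def EStar (E : V → V → Prop) (cap : V × V → ℕ) (s t : V) (k : ℕ) :
    VStar V k → VStar V k → Prop
  | Sum.inl ((v, e, i), false), Sum.inl ((v', e', i'), true) =>
      v' = v ∧ e.2 = v ∧ E e.1 e.2 ∧ i < cap e ∧ e'.1 = v ∧ E e'.1 e'.2 ∧ i' < cap e'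
  | Sum.inl ((v, e, i), true), Sum.inl ((v', e', i'), false) =>
      e' = e ∧ e.1 = v ∧ e.2 = v' ∧ E e.1 e.2 ∧ i' = i ∧ i < cap e
  | Sum.inr (Sum.inl _), Sum.inl ((v, e, _i), true) =>
      v = s ∧ e.1 = s ∧ E e.1 e.2 ∧ _i < cap e
  | Sum.inl ((v, e, _i), false), Sum.inr (Sum.inr _) =>
      v = t ∧ e.2 = t ∧ E e.1 e.2 ∧ _i < cap e
  | _, _ => False

/-- The new source set `X` of `N*`. -/
def XStar (V : Type*) (k : ℕ) : Set (VStar V k) :=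
  {u | ∃ a : Fin k, u = Sum.inr (Sum.inl a)}

/-- The new sink set `Y` of `N*`. -/
def YStar (V : Type*) (k : ℕ) : Set (VStar V k) :=
  {u | ∃ b : Fin k, u = Sum.inr (Sum.inr b)}

/-- A set of `k` pairwise vertex-disjoint simple directed paths connecting `X`
to `Y`. -/
def IsPathSys {W : Type*} (E : W → W → Prop) (X Y : Set W) (k : ℕ)
    (P : Finset (List W)) : Prop :=
  P.card = k ∧
    (∀ w ∈ P, w ≠ [] ∧ w.Chain' E ∧ w.Nodup ∧
      (∀ a, w.head? = some a → a ∈ X) ∧ (∀ b, w.getLast? = some b → b ∈ Y)) ∧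
    ∀ w ∈ P, ∀ w' ∈ P, w ≠ w' → ∀ v, v ∈ w → v ∉ w'

lemma edges_cons {α : Type*} (a : α) (m : List α) (h : m ≠ []) :
    ((a::m).zip m) = (a, m.head h) :: m.zip m.tail := by
  cases m with
  | nil => simp at h
  | cons b m' => simp [List.zip_cons_cons]

lemma edges_suffix {α : Type*} {w' w : List α} (h : w' <:+ w) (hne : w' ≠ []) :
    w'.zip w'.tail <:+ w.zip w.tail := by
  obtain ⟨u, rfl⟩ := h
  induction u with
  | nil => exact List.suffix_refl _
  | cons a u ih =>
    refine ih.trans ?_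
    have hm : u ++ w' ≠ [] := by simp [hne]
    have : (a :: u ++ w').zip (a :: u ++ w').tail
        = (a, (u ++ w').head hm) :: (u ++ w').zip (u ++ w').tail := by
      simpa using edges_cons a (u ++ w') hm
    rw [this]
    exact List.suffix_cons_iff.2 (Or.inr (List.suffix_refl _))

lemma shortcut_aux {α : Type*} [DecidableEq α] (E : α → α → Prop) :
    ∀ n (w : List α), w.length ≤ n → w ≠ [] → w.Chain' E →
    ∃ p : List α, p ≠ [] ∧ p.Chain' E ∧ p.Nodup ∧ p.head? = w.head? ∧
      p.getLast? = w.getLast? ∧ (∀ v ∈ p, v ∈ w) ∧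
      ∀ e, ((p.zip p.tail).count e) ≤ ((w.zip w.tail).count e) := by
  intro n
  induction n with
  | zero => intro w hw hne; simp at hw; exact absurd hw hne
  | succ n ih =>
  rintro (_ | ⟨a, l⟩) hlen hne hch
  · exact absurd rfl hne
  by_cases hal : a ∈ l
  · obtain ⟨l₂, l₃, rfl⟩ := List.append_of_mem hal
    have hsuf : (a :: l₃) <:+ (a :: (l₂ ++ a :: l₃)) := ⟨a :: l₂, by simp⟩
    have hlen' : (a :: l₃).length ≤ n := by simp at hlen ⊢; omega
    obtain ⟨p, hp1, hp2, hp3, hp4, hp5, hp7, hp6⟩ :=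
      ih (a :: l₃) hlen' (by simp) (hch.suffix hsuf)
    refine ⟨p, hp1, hp2, hp3, by simpa using hp4, ?_, ?_, ?_⟩
    · rw [hp5]
      have h := List.getLast?_append (l := a :: l₂) (l' := a :: l₃)
      simp only [List.cons_append] at h
      rw [h]
      rcases hx : (a :: l₃).getLast? with _ | x
      · exact absurd hx (by simp)
      · simp
    · intro v hv
      exact hsuf.subset (hp7 v hv)
    · intro e
      exact (hp6 e).trans ((edges_suffix hsuf (by simp)).count_le e)
  · rcases l with _ | ⟨b, l'⟩
    · exact ⟨[a], by simp, List.isChain_singleton a, by simp, rfl, rfl, by simp, fun e => le_rfl⟩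
    · obtain ⟨p, hp1, hp2, hp3, hp4, hp5, hp7, hp6⟩ :=
        ih (b :: l') (by simp at hlen ⊢; omega) (by simp) hch.tail
      refine ⟨a :: p, by simp, ?_, ?_, by simp, ?_, ?_, ?_⟩
      · refine List.isChain_cons.2 ?_
        refine ⟨fun y hy => ?_, hp2⟩
        have : y = b := by rw [hp4] at hy; simp at hy; exact hy.symm
        subst this
        exact (List.isChain_cons_cons.1 hch).1
      · exact List.nodup_cons.2 ⟨fun hmem => hal (hp7 a hmem), hp3⟩
      · match p, hp1 with
        | c :: p', _ => rw [List.getLast?_cons_cons, hp5, List.getLast?_cons_cons]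
      · intro v hv
        rcases List.mem_cons.1 hv with h | h
        · simp [h]
        · exact List.mem_cons_of_mem a (hp7 v h)
      · intro e
        match p, hp1 with
        | c :: p', _ =>
          have hc : c = b := by have := hp4.symm; simp at this; exact this.symm
          subst hc
          simp only [List.zip_cons_cons, List.count_cons, List.tail_cons]
          have := hp6 e
          simp only [List.zip_cons_cons, List.tail_cons] at this ⊢
          omega

lemma shortcut {α : Type*} [DecidableEq α] (E : α → α → Prop)
    (w : List α) (hne : w ≠ []) (hch : w.Chain' E) :
    ∃ p : List α, p ≠ [] ∧ p.Chain' E ∧ p.Nodup ∧ p.head? = w.head? ∧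
      p.getLast? = w.getLast? ∧ (∀ v ∈ p, v ∈ w) ∧
      ∀ e, ((p.zip p.tail).count e) ≤ ((w.zip w.tail).count e) :=
  shortcut_aux E w.length w le_rfl hne hch

section Elim
variable {V : Type*} (E : V → V → Prop) (cap : V × V → ℕ) (s t : V) (k : ℕ)

lemma EStar_sink_elim {b : Fin k} {c : VStar V k} :
    ¬ EStar E cap s t k (Sum.inr (Sum.inr b)) c := by
  rcases c with ⟨⟨⟨v,e,i⟩,(_|_)⟩⟩ | (a | b') <;> simp [EStar]

lemma EStar_src_elim {a : Fin k} {c : VStar V k}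
    (h : EStar E cap s t k (Sum.inr (Sum.inl a)) c) :
    ∃ e i, c = Sum.inl ((s, e, i), true) ∧ e.1 = s ∧ E e.1 e.2 ∧ i < cap e := by
  rcases c with ⟨⟨⟨v,e,i⟩,(_|_)⟩⟩ | (a' | b') <;> simp [EStar] at h
  obtain ⟨h1, h2, h3, h4⟩ := h
  exact ⟨e, i, by rw [h1], h2, h3, h4⟩

lemma EStar_out_elim {v : V} {e : V × V} {i : ℕ} {c : VStar V k}
    (h : EStar E cap s t k (Sum.inl ((v, e, i), true)) c) :
    c = Sum.inl ((e.2, e, i), false) ∧ e.1 = v ∧ E e.1 e.2 ∧ i < cap e := by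
  rcases c with ⟨⟨⟨v',e',i'⟩,(_|_)⟩⟩ | (a' | b') <;> simp [EStar] at h
  obtain ⟨h1, h2, h3, h4, h5, h6⟩ := h
  exact ⟨by rw [h1, h3, h5], h2, h4, h6⟩

lemma EStar_in_elim {v : V} {e : V × V} {i : ℕ} {c : VStar V k}
    (h : EStar E cap s t k (Sum.inl ((v, e, i), false)) c) :
    (∃ e' i', c = Sum.inl ((v, e', i'), true) ∧ e'.1 = v ∧ E e'.1 e'.2 ∧ i' < cap e'
        ∧ e.2 = v ∧ E e.1 e.2 ∧ i < cap e) ∨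
    (∃ b : Fin k, c = Sum.inr (Sum.inr b) ∧ v = t ∧ e.2 = t ∧ E e.1 e.2 ∧ i < cap e) := by
  rcases c with ⟨⟨⟨v',e',i'⟩,(_|_)⟩⟩ | (a' | b') <;> simp [EStar] at h
  · obtain ⟨h1, h2, h3, h4, h5, h6, h7⟩ := h
    exact Or.inl ⟨e', i', by rw [h1], h5, h6, h7, h2, h3, h4⟩
  · obtain ⟨h1, h2, h3, h4⟩ := h
    exact Or.inr ⟨b', rfl, h1, h2, h3, h4⟩

end Elim

/-- In-copy of the target of edge `p.1` with index `p.2`. -/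
def inCopy (V : Type*) (k : ℕ) (p : (V × V) × ℕ) : VStar V k :=
  Sum.inl ((p.1.2, p.1, p.2), false)

/-- Out-copy of the source of edge `p.1` with index `p.2`. -/
def outCopy (V : Type*) (k : ℕ) (p : (V × V) × ℕ) : VStar V k :=
  Sum.inl ((p.1.1, p.1, p.2), true)

section Decode
variable {V : Type*} (E : V → V → Prop) (cap : V × V → ℕ) (s t : V) (k : ℕ)

lemma decodeIn : ∀ (n : ℕ) (w : List (VStar V k)), w.length ≤ n →
    w.Chain' (EStar E cap s t k) →
    ∀ (v : V) (e : V × V) (i : ℕ), e.2 = v →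
    w.head? = some (Sum.inl ((v, e, i), false)) →
    (∃ b : Fin k, w.getLast? = some (Sum.inr (Sum.inr b))) →
    ∃ L : List ((V × V) × ℕ),
      L.Chain' (fun p q => p.1.2 = q.1.1) ∧
      (∀ p ∈ L, E p.1.1 p.1.2 ∧ p.2 < cap p.1) ∧
      (∀ p, L.head? = some p → p.1.1 = v) ∧
      (v :: L.map (fun p => p.1.2)).getLast? = some t ∧
      List.Sublist (L.map (inCopy V k)) w.tail := by
  intro n
  induction n with
  | zero =>
    intro w hw hch v e i he hh hl
    have : w = [] := List.length_eq_zero_iff.1 (Nat.le_zero.1 hw)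
    subst this; simp at hh
  | succ n ih =>
  intro w hw hch v e i he hh hl
  match w, hh with
  | x :: rest, hh =>
  have hx : x = Sum.inl ((v, e, i), false) := by simpa using hh
  subst hx
  obtain ⟨b, hb⟩ := hl
  match rest with
  | [] => simp at hb
  | y :: rest' =>
    have hxy : EStar E cap s t k (Sum.inl ((v, e, i), false)) y :=
      (List.isChain_cons_cons.1 hch).1
    rcases EStar_in_elim E cap s t k hxy with
      ⟨e', i', rfl, he'1, hE', hi', _, _, _⟩ | ⟨b', rfl, rfl, _, _, _⟩
    · -- continue through an out-copy
      match rest', hb with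
      | [], hb => simp at hb
      | z :: rest'', hb =>
        have hyz : EStar E cap s t k (Sum.inl ((v, e', i'), true)) z :=
          (List.isChain_cons_cons.1 hch.tail).1
        obtain ⟨rfl, -, -, -⟩ := EStar_out_elim E cap s t k hyz
        have hch'' : (Sum.inl ((e'.2, e', i'), false) :: rest'').Chain'
            (EStar E cap s t k) := hch.tail.tail
        obtain ⟨L', hL1, hL2, hL3, hL4, hL5⟩ :=
          ih (Sum.inl ((e'.2, e', i'), false) :: rest'')
            (by simp at hw ⊢; omega) hch'' e'.2 e' i' rfl (by simp)
            ⟨b, by simpa using hb⟩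
        refine ⟨(e', i') :: L', ?_, ?_, ?_, ?_, ?_⟩
        · exact List.isChain_cons.2 ⟨fun q hq => (hL3 q hq).symm, hL1⟩
        · rintro p hp
          rcases List.mem_cons.1 hp with rfl | hp
          · exact ⟨hE', hi'⟩
          · exact hL2 p hp
        · rintro p hp
          simp at hp; subst hp; exact he'1
        · simpa using hL4
        · show List.Sublist (inCopy V k (e', i') :: L'.map (inCopy V k)) _
          have : inCopy V k (e', i') = Sum.inl ((e'.2, e', i'), false) := rfl
          rw [this]
          exact List.Sublist.cons _ (List.cons_sublist_cons.2 (by simpa using hL5))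
    · -- reached the sink side: v = t
      refine ⟨[], List.IsChain.nil, by simp, by simp, by simp, by simp⟩

end Decode

section Walk
variable {V : Type*} (E : V → V → Prop) (cap : V × V → ℕ) (s t : V) (k : ℕ)

lemma decodePath (w : List (VStar V k)) (hne : w ≠ [])
    (hch : w.Chain' (EStar E cap s t k)) (hnd : w.Nodup)
    (hh : ∀ a, w.head? = some a → a ∈ XStar V k)
    (hl : ∀ b, w.getLast? = some b → b ∈ YStar V k) :
    ∃ EL : List ((V × V) × ℕ), EL ≠ [] ∧
      EL.Chain' (fun p q => p.1.2 = q.1.1) ∧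
      (∀ p ∈ EL, E p.1.1 p.1.2 ∧ p.2 < cap p.1) ∧
      (∀ p, EL.head? = some p → p.1.1 = s) ∧
      (s :: EL.map (fun p => p.1.2)).getLast? = some t ∧
      List.Sublist (EL.map (inCopy V k)) w := by
  obtain ⟨u, hu⟩ := List.getLast?_isSome.2 hne |> Option.isSome_iff_exists.1
  obtain ⟨b, rfl⟩ := hl u hu
  match w, hne with
  | x :: rest, _ =>
    obtain ⟨a, rfl⟩ := hh x rfl
    match rest, hu with
    | [], hu =>
      simp only [List.getLast?_singleton] at hu
      exact absurd hu (by intro h; injection h with h1; injection h1 with h2; injection h2)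
    | y :: rest', hu =>
      obtain ⟨e0, i0, rfl, he0, hE0, hi0⟩ :=
        EStar_src_elim E cap s t k (List.isChain_cons_cons.1 hch).1
      match rest', hu with
      | [], hu => simp at hu
      | z :: rest'', hu =>
        obtain ⟨rfl, -, -, -⟩ :=
          EStar_out_elim E cap s t k (List.isChain_cons_cons.1 hch.tail).1
        obtain ⟨L, hL1, hL2, hL3, hL4, hL5⟩ :=
          decodeIn E cap s t k (Sum.inl ((e0.2, e0, i0), false) :: rest'').length
            _ le_rfl hch.tail.tail e0.2 e0 i0 rfl (by simp)
            ⟨b, by simpa using hu⟩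
        refine ⟨(e0, i0) :: L, by simp, ?_, ?_, ?_, ?_, ?_⟩
        · exact List.isChain_cons.2 ⟨fun q hq => (hL3 q hq).symm, hL1⟩
        · rintro p hp
          rcases List.mem_cons.1 hp with rfl | hp
          · exact ⟨hE0, hi0⟩
          · exact hL2 p hp
        · rintro p hp; simp at hp; subst hp; exact he0
        · simpa using hL4
        · show List.Sublist (inCopy V k (e0, i0) :: L.map (inCopy V k)) _
          have h1 : inCopy V k (e0, i0) = Sum.inl ((e0.2, e0, i0), false) := rfl
          rw [h1]
          refine List.Sublist.cons _ (List.Sublist.cons _ ?_)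
          exact List.cons_sublist_cons.2 (by simpa using hL5)

lemma walk_chain : ∀ (L : List ((V × V) × ℕ)) (v : V),
    L.Chain' (fun p q => p.1.2 = q.1.1) → (∀ p, L.head? = some p → p.1.1 = v) →
    (∀ p ∈ L, E p.1.1 p.1.2) → (v :: L.map (fun p => p.1.2)).Chain' E := by
  intro L
  induction L with
  | nil => intro v _ _ _; exact List.isChain_singleton v
  | cons p L' ihL =>
    intro v hch hhd hE
    refine List.isChain_cons.2 ⟨?_, ?_⟩
    · intro y hy
      simp at hy
      subst hy
      have := hhd p rfl
      have h2 := hE p (by simp)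
      rwa [this] at h2
    · exact ihL p.1.2 hch.tail
        (fun q hq => ((List.isChain_cons.1 hch).1 q hq).symm)
        (fun q hq => hE q (List.mem_cons_of_mem _ hq))

lemma walk_zip : ∀ (L : List ((V × V) × ℕ)) (v : V),
    L.Chain' (fun p q => p.1.2 = q.1.1) → (∀ p, L.head? = some p → p.1.1 = v) →
    (v :: L.map (fun p => p.1.2)).zip (L.map (fun p => p.1.2))
      = L.map (fun p => p.1) := by
  intro L
  induction L with
  | nil => intro v _ _; simp
  | cons p L' ihL =>
    intro v hch hhd
    simp only [List.map_cons, List.zip_cons_cons]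
    rw [ihL p.1.2 hch.tail (fun q hq => ((List.isChain_cons.1 hch).1 q hq).symm)]
    congr 1
    have := hhd p rfl
    rw [← this]

end Walk

lemma count_fst_eq_length_filter {α β : Type*} [BEq α] [LawfulBEq α]
    (l : List (α × β)) (e : α) :
    (l.map Prod.fst).count e = (l.filter (fun p => p.1 == e)).length := by
  induction l with
  | nil => simp
  | cons p l ih =>
    by_cases h : p.1 = e <;>
      simp [List.count_cons, h, ih, List.filter_cons]

section ZipLemmas
variable {α : Type*} {E : α → α → Prop}

lemma zip_tail_mem_E : ∀ {l : List α}, l.Chain' E → ∀ p ∈ l.zip l.tail, E p.1 p.2 := by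
  intro l
  induction l with
  | nil => intro _ p hp; simp at hp
  | cons a l ih =>
    intro hch p hp
    cases l with
    | nil => simp at hp
    | cons b l' =>
      rw [List.tail_cons, List.zip_cons_cons] at hp
      rcases List.mem_cons.1 hp with rfl | hp
      · exact (List.isChain_cons_cons.1 hch).1
      · exact ih hch.tail p hp

lemma zip_tail_compose : ∀ (l : List α),
    (l.zip l.tail).Chain' (fun p q => p.2 = q.1) := by
  intro l
  induction l with
  | nil => exact List.IsChain.nil
  | cons a l ih =>
    cases l with
    | nil => exact List.IsChain.nil
    | cons b l' =>
      rw [List.tail_cons, List.zip_cons_cons]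
      refine List.isChain_cons.2 ⟨?_, ih⟩
      intro q hq
      cases l' with
      | nil => simp at hq
      | cons c l'' =>
        rw [List.zip_cons_cons] at hq
        simp at hq
        rw [← hq]

lemma zip_tail_last {t : α} : ∀ (l : List α), l.getLast? = some t →
    ∀ p, (l.zip l.tail).getLast? = some p → p.2 = t := by
  intro l
  induction l with
  | nil => intro h; simp at h
  | cons a l ih =>
    intro hl p hp
    cases l with
    | nil => simp at hp
    | cons b l' =>
      rw [List.tail_cons, List.zip_cons_cons] at hp
      cases l' with
      | nil =>
        simp at hp hl
        rw [← hp, ← hl]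
      | cons c l'' =>
        rw [List.getLast?_cons_cons] at hl
        refine ih hl p ?_
        simp only [List.tail_cons]
        rw [List.zip_cons_cons] at hp ⊢
        rwa [List.getLast?_cons_cons] at hp

lemma map_fst_zip_tail : ∀ (l : List α), (l.zip l.tail).map Prod.fst = l.dropLast := by
  intro l
  induction l with
  | nil => simp
  | cons a l ih =>
    cases l with
    | nil => simp
    | cons b l' =>
      rw [List.tail_cons, List.zip_cons_cons, List.map_cons]
      simp only [List.tail_cons] at ih
      rw [ih]
      simp

end ZipLemmas

/-- The `j`-th new source vertex. -/
def srcV (V : Type*) (k : ℕ) (j : Fin k) : VStar V k := Sum.inr (Sum.inl j)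

/-- The `j`-th new sink vertex. -/
def sinkV (V : Type*) (k : ℕ) (j : Fin k) : VStar V k := Sum.inr (Sum.inr j)

section Encode
variable {V : Type*} (E : V → V → Prop) (cap : V × V → ℕ) (s t : V) (k : ℕ)

lemma outCopy_inj {p q : (V × V) × ℕ} (h : outCopy V k p = outCopy V k q) :
    p = q := by
  have h2 := Sum.inl.inj h
  have h3 : p.1 = q.1 := congrArg (fun z => z.1.2.1) h2
  have h4 : p.2 = q.2 := congrArg (fun z => z.1.2.2) h2
  exact Prod.ext h3 h4

lemma inCopy_inj {p q : (V × V) × ℕ} (h : inCopy V k p = inCopy V k q) :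
    p = q := by
  have h2 := Sum.inl.inj h
  have h3 : p.1 = q.1 := congrArg (fun z => z.1.2.1) h2
  have h4 : p.2 = q.2 := congrArg (fun z => z.1.2.2) h2
  exact Prod.ext h3 h4

lemma outCopy_ne_inCopy {p q : (V × V) × ℕ} :
    outCopy V k p ≠ inCopy V k q := by
  intro h
  have h2 := congrArg (fun z => z.2) (Sum.inl.inj h)
  simp at h2

/-- The two-element block of `N*`-vertices corresponding to traversing one
edge. -/
def eBlock (p : (V × V) × ℕ) : List (VStar V k) :=
  [outCopy V k p, inCopy V k p]

lemma mem_encode {L : List ((V × V) × ℕ)} {u : VStar V k} :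
    u ∈ L.flatMap (eBlock k) ↔
      ∃ p ∈ L, u = outCopy V k p ∨ u = inCopy V k p := by
  rw [List.mem_flatMap]
  refine exists_congr fun p => and_congr_right fun _ => ?_
  simp [eBlock]

lemma encode_chain (j : Fin k) : ∀ L : List ((V × V) × ℕ),
    L.Chain' (fun p q => p.1.2 = q.1.1) →
    (∀ p ∈ L, E p.1.1 p.1.2 ∧ p.2 < cap p.1) →
    (∀ p, L.getLast? = some p → p.1.2 = t) →
    (L.flatMap (eBlock k) ++ [sinkV V k j]).Chain'
      (EStar E cap s t k) := by
  intro L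
  induction L with
  | nil => exact fun _ _ _ => List.isChain_singleton _
  | cons p L' ih =>
    intro hch hEc hlast
    have hE := (hEc p (by simp)).1
    have hc := (hEc p (by simp)).2
    show ((outCopy V k p :: inCopy V k p :: (L'.flatMap (eBlock k)))
        ++ [sinkV V k j]).Chain' (EStar E cap s t k)
    simp only [List.cons_append]
    refine List.isChain_cons_cons.2 ⟨?_, List.isChain_cons.2 ⟨?_, ?_⟩⟩
    · exact ⟨rfl, rfl, rfl, hE, rfl, hc⟩
    · intro y hy
      cases L' with
      | nil =>
        simp at hy
        subst hy
        have ht : p.1.2 = t := hlast p (by simp)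
        exact ⟨ht, ht, hE, hc⟩
      | cons q L'' =>
        have hy' : y = outCopy V k q := by
          exact (by simpa [eBlock] using hy : outCopy V k q = y).symm
        subst hy'
        have hcomp : p.1.2 = q.1.1 := (List.isChain_cons_cons.1 hch).1
        exact ⟨hcomp.symm, rfl, hE, hc, hcomp.symm,
          (hEc q (by simp)).1, (hEc q (by simp)).2⟩
    · refine ih hch.tail (fun q hq => hEc q (List.mem_cons_of_mem _ hq)) ?_
      intro q hq
      cases L' with
      | nil => simp at hq
      | cons r L'' =>
        exact hlast q (by rw [List.getLast?_cons_cons]; exact hq)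

lemma encode_nodup : ∀ L : List ((V × V) × ℕ),
    (L.map (fun p => p.1)).Nodup → (L.flatMap (eBlock k)).Nodup := by
  intro L
  induction L with
  | nil => simp
  | cons p L' ih =>
    intro hnd
    rw [List.map_cons, List.nodup_cons] at hnd
    show (outCopy V k p :: inCopy V k p :: L'.flatMap (eBlock k)).Nodup
    have hout : outCopy V k p ∉ L'.flatMap (eBlock k) := by
      intro hmem
      obtain ⟨q, hq, h | h⟩ := (mem_encode k).1 hmem
      · have : p.1 = q.1 := congrArg Prod.fst (outCopy_inj k h)
        exact hnd.1 (this ▸ List.mem_map_of_mem hq)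
      · exact outCopy_ne_inCopy k h
    have hin : inCopy V k p ∉ L'.flatMap (eBlock k) := by
      intro hmem
      obtain ⟨q, hq, h | h⟩ := (mem_encode k).1 hmem
      · exact outCopy_ne_inCopy k h.symm
      · have : p.1 = q.1 := congrArg Prod.fst (inCopy_inj k h)
        exact hnd.1 (this ▸ List.mem_map_of_mem hq)
    refine List.nodup_cons.2 ⟨?_, List.nodup_cons.2 ⟨hin, ih hnd.2⟩⟩
    simp only [List.mem_cons]
    rintro (h | h)
    · exact outCopy_ne_inCopy k h
    · exact hout h

end Encode

/-- **Flow-to-disjoint-paths reduction.**  In a network `N` with edge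
capacities `cap ≤ k`, there is a proper integral flow of value `k` from `s` to
`t` (i.e. `k` simple `s`–`t` paths using each edge at most its capacity many
times in total) iff there are `k` pairwise vertex-disjoint simple directed
paths connecting `XStar` to `YStar` in the gadget network `N*`. -/
theorem flow_iff_disjoint_paths [DecidableEq V]
    (k : ℕ) (E : V → V → Prop) (cap : V × V → ℕ) (hcap : ∀ e, cap e ≤ k)
    (s t : V) (hst : s ≠ t) :
    (∃ Fl : Fin k → List V,
      (∀ j, Fl j ≠ [] ∧ (Fl j).Chain' E ∧ (Fl j).Nodup ∧
        (Fl j).head? = some s ∧ (Fl j).getLast? = some t) ∧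
      (∀ e : V × V, (∑ j, ((Fl j).zip (Fl j).tail).count e) ≤ cap e)) ↔
    (∃ P : Finset (List (VStar V k)),
      IsPathSys (EStar E cap s t k) (XStar V k) (YStar V k) k P) := by
  constructor
  · 
    rintro ⟨Fl, hprops, hcapc⟩
    classical
    -- an injective assignment of capacity indices to the paths using each edge
    obtain ⟨idx, hidx_lt, hidx_inj⟩ :
        ∃ idx : Fin k → (V × V) → ℕ,
          (∀ j e, e ∈ (Fl j).zip (Fl j).tail → idx j e < cap e) ∧
          (∀ j j' e, e ∈ (Fl j).zip (Fl j).tail → e ∈ (Fl j').zip (Fl j').tail →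
            idx j e = idx j' e → j = j') := by
      set users : (V × V) → Finset (Fin k) :=
        fun e => Finset.univ.filter (fun j => e ∈ (Fl j).zip (Fl j).tail)
        with husers
      have husers_mem : ∀ j e, e ∈ (Fl j).zip (Fl j).tail → j ∈ users e := by
        intro j e he
        rw [husers]
        exact Finset.mem_filter.2 ⟨Finset.mem_univ _, he⟩
      have husers_card : ∀ e, (users e).card ≤ cap e := by
        intro e
        calc (users e).card = ∑ _j ∈ users e, 1 := Finset.card_eq_sum_ones _
          _ ≤ ∑ j ∈ users e, ((Fl j).zip (Fl j).tail).count e := by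
              refine Finset.sum_le_sum fun j hj => ?_
              rw [husers] at hj
              exact List.count_pos_iff.2 (Finset.mem_filter.1 hj).2
          _ ≤ ∑ j, ((Fl j).zip (Fl j).tail).count e :=
              Finset.sum_le_sum_of_subset (Finset.subset_univ _)
          _ ≤ cap e := hcapc e
      refine ⟨fun j e => ((users e).sort (· ≤ ·)).idxOf j, ?_, ?_⟩
      · intro j e he
        have h1 : ((users e).sort (· ≤ ·)).idxOf j
            < ((users e).sort (· ≤ ·)).length :=
          List.idxOf_lt_length_iff.2 ((Finset.mem_sort _).2 (husers_mem j e he))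
        rw [Finset.length_sort] at h1
        exact h1.trans_le (husers_card e)
      · intro j j' e he he' hmm
        exact (List.idxOf_inj ((Finset.mem_sort _).2 (husers_mem j e he))).1 hmm
    -- each path has length at least 2
    have hFl2 : ∀ j, ∃ b l', Fl j = s :: b :: l' := by
      intro j
      obtain ⟨hne, hch, hnd, hhd, hls⟩ := hprops j
      rcases hFlj : Fl j with _ | ⟨a, _ | ⟨b, l'⟩⟩
      · exact absurd hFlj hne
      · rw [hFlj] at hhd hls
        simp at hhd hls
        exact absurd (hhd.symm.trans hls) hst
      · rw [hFlj] at hhd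
        simp at hhd
        refine ⟨b, l', ?_⟩
        rw [hhd]
    -- the indexed edge lists
    set iel : Fin k → List ((V × V) × ℕ) :=
      fun j => ((Fl j).zip (Fl j).tail).map (fun e => (e, idx j e)) with hiel
    have hiel_mem : ∀ j p, p ∈ iel j ↔
        ∃ e ∈ (Fl j).zip (Fl j).tail, (e, idx j e) = p := by
      intro j p
      rw [hiel]
      simp [List.mem_map]
    have hiel_prop : ∀ j, ∀ p ∈ iel j, E p.1.1 p.1.2 ∧ p.2 < cap p.1 := by
      intro j p hp
      obtain ⟨e, he, rfl⟩ := (hiel_mem j p).1 hp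
      exact ⟨zip_tail_mem_E (hprops j).2.1 e he, hidx_lt j e he⟩
    have hiel_chain : ∀ j, (iel j).Chain' (fun p q => p.1.2 = q.1.1) := by
      intro j
      rw [hiel]
      refine (List.isChain_map _).2 ?_
      exact zip_tail_compose _
    have hiel_last : ∀ j p, (iel j).getLast? = some p → p.1.2 = t := by
      intro j p hp
      rw [hiel, List.getLast?_map] at hp
      rcases he : ((Fl j).zip (Fl j).tail).getLast? with _ | e
      · rw [he] at hp; simp at hp
      · rw [he] at hp
        simp at hp
        have := zip_tail_last (Fl j) (hprops j).2.2.2.2 e he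
        rw [← hp]
        exact this
    have hiel_fst_nodup : ∀ j, ((iel j).map (fun p => p.1)).Nodup := by
      intro j
      rw [hiel, List.map_map]
      have h1 : (fun (p : (V × V) × ℕ) => p.1) ∘ (fun e => (e, idx j e)) = id :=
        rfl
      rw [h1, List.map_id]
      refine List.Nodup.of_map Prod.fst ?_
      rw [map_fst_zip_tail]
      exact ((Fl j).dropLast_sublist).nodup (hprops j).2.2.1
    have hiel_ne : ∀ j, iel j ≠ [] := by
      intro j
      obtain ⟨b, l', hb⟩ := hFl2 j
      simp only [hiel]
      rw [hb]
      simp [List.zip_cons_cons]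
    have hiel_head : ∀ j p, (iel j).head? = some p → p.1.1 = s ∧ p ∈ iel j := by
      intro j p hp
      refine ⟨?_, List.mem_of_mem_head? hp⟩
      obtain ⟨b, l', hb⟩ := hFl2 j
      simp only [hiel] at hp
      rw [hb] at hp
      simp [List.zip_cons_cons] at hp
      rw [← hp]
    -- the paths in N*
    set w : Fin k → List (VStar V k) := fun j =>
      srcV V k j :: ((iel j).flatMap (eBlock k) ++ [sinkV V k j]) with hwdef
    have hw_chain : ∀ j, (w j).Chain' (EStar E cap s t k) := by
      intro j
      rw [hwdef]
      refine List.isChain_cons.2 ⟨?_, encode_chain E cap s t k j (iel j)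
        (hiel_chain j) (hiel_prop j) (hiel_last j)⟩
      intro y hy
      rcases hie : iel j with _ | ⟨p0, rest⟩
      · exact absurd hie (hiel_ne j)
      · rw [hie] at hy
        have hy' : y = outCopy V k p0 := by
          simp [eBlock] at hy
          rw [← hy]
      -- hy' : the first vertex after the source
        subst hy'
        have hp0 : p0 ∈ iel j := by rw [hie]; simp
        have hs0 : p0.1.1 = s := (hiel_head j p0 (by rw [hie]; rfl)).1
        exact ⟨hs0, hs0, (hiel_prop j p0 hp0).1, (hiel_prop j p0 hp0).2⟩
    have hw_nodup : ∀ j, (w j).Nodup := by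
      intro j
      rw [hwdef]
      refine List.nodup_cons.2 ⟨?_, ?_⟩
      · intro hmem
        rcases List.mem_append.1 hmem with h | h
        · obtain ⟨p, -, h | h⟩ := (mem_encode k).1 h <;> exact nomatch h
        · have : srcV V k j = sinkV V k j := by simpa using h
          have h2 := Sum.inr.inj this
          exact nomatch h2
      · rw [List.nodup_append]
        refine ⟨encode_nodup k (iel j) (hiel_fst_nodup j), by simp, ?_⟩
        intro u hu u' hu2 hu'
        have : u' = sinkV V k j := by simpa using hu2
        subst this; subst hu'
        obtain ⟨p, -, h | h⟩ := (mem_encode k).1 hu <;> exact nomatch h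
    have hw_head : ∀ j, (w j).head? = some (srcV V k j) := fun j => by
      simp only [hwdef]
      rfl
    have hw_last : ∀ j, (w j).getLast? = some (sinkV V k j) := by
      intro j
      rw [hwdef]
      show ((srcV V k j :: (iel j).flatMap (eBlock k)) ++ [sinkV V k j]).getLast?
        = some (sinkV V k j)
      rw [List.getLast?_append]
      rfl
    -- membership characterisation
    have hw_mem : ∀ j u, u ∈ w j ↔ (u = srcV V k j ∨ u = sinkV V k j ∨
        ∃ p ∈ iel j, u = outCopy V k p ∨ u = inCopy V k p) := by
      intro j u
      simp only [hwdef]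
      rw [List.mem_cons, List.mem_append, List.mem_singleton, mem_encode k]
      constructor <;>
        rintro (h | h | h) <;>
          first
            | exact Or.inl h
            | exact Or.inr (Or.inl h)
            | exact Or.inr (Or.inr h)
    -- injectivity of the path map
    have hw_inj : Function.Injective w := by
      intro j j' h
      have h1 := hw_head j
      rw [h, hw_head j'] at h1
      have h2 := Option.some.inj h1
      have h3 := Sum.inl.inj (Sum.inr.inj h2)
      exact h3.symm
    refine ⟨Finset.image w Finset.univ, ?_, ?_, ?_⟩
    · rw [Finset.card_image_of_injective _ hw_inj]
      simp
    · intro w1 hw1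
      obtain ⟨j, -, rfl⟩ := Finset.mem_image.1 hw1
      refine ⟨by rw [hwdef]; simp, hw_chain j, hw_nodup j, ?_, ?_⟩
      · intro a ha
        rw [hw_head j] at ha
        exact ⟨j, (Option.some.inj ha).symm⟩
      · intro b hb
        rw [hw_last j] at hb
        exact ⟨j, (Option.some.inj hb).symm⟩
    · intro w1 hw1 w2 hw2 hne u hu1 hu2
      obtain ⟨j, -, rfl⟩ := Finset.mem_image.1 hw1
      obtain ⟨j', -, rfl⟩ := Finset.mem_image.1 hw2
      have hjj : j ≠ j' := fun h => hne (h ▸ rfl)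
      rcases (hw_mem j u).1 hu1 with h1 | h1 | ⟨p, hp, hcp⟩ <;>
        rcases (hw_mem j' u).1 hu2 with h2 | h2 | ⟨q, hq, hcq⟩
      · exact hjj (Sum.inl.inj (Sum.inr.inj (h1.symm.trans h2)))
      · exact nomatch (h1.symm.trans h2)
      · rcases hcq with h | h <;> exact nomatch (h.symm.trans h1)
      · exact nomatch (h1.symm.trans h2)
      · exact hjj (Sum.inr.inj (Sum.inr.inj (h1.symm.trans h2)))
      · rcases hcq with h | h <;> exact nomatch (h.symm.trans h1)
      · rcases hcp with h | h <;> exact nomatch (h.symm.trans h2)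
      · rcases hcp with h | h <;> exact nomatch (h.symm.trans h2)
      · obtain ⟨e, he, rfl⟩ := (hiel_mem j p).1 hp
        obtain ⟨e', he', rfl⟩ := (hiel_mem j' q).1 hq
        rcases hcp with rfl | rfl <;> rcases hcq with h | h
        · have h5 := outCopy_inj k h
          have he2 : e = e' := congrArg Prod.fst h5
          subst he2
          exact hjj (hidx_inj j j' e he he' (congrArg Prod.snd h5))
        · exact outCopy_ne_inCopy k h
        · exact outCopy_ne_inCopy k h.symm
        · have h5 := inCopy_inj k h
          have he2 : e = e' := congrArg Prod.fst h5
          subst he2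
          exact hjj (hidx_inj j j' e he he' (congrArg Prod.snd h5))
  · rintro ⟨P, hcard, hprops, hdisj⟩
    choose EL hEL0 hEL1 hEL2 hEL3 hEL4 hEL5 using
      fun (x : {w // w ∈ P}) =>
        decodePath E cap s t k x.1 (hprops x.1 x.2).1 (hprops x.1 x.2).2.1
          (hprops x.1 x.2).2.2.1 (hprops x.1 x.2).2.2.2.1 (hprops x.1 x.2).2.2.2.2
    set wk : {w // w ∈ P} → List V := fun x => s :: (EL x).map (fun p => p.1.2)
      with hwk
    have hwkch : ∀ x, (wk x).Chain' E := fun x =>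
      walk_chain E _ s (hEL1 x) (hEL3 x) (fun p hp => (hEL2 x p hp).1)
    choose Fl0 hFl1 hFl2 hFl3 hFl4 hFl5 hFl6 hFl7 using
      fun x : {w // w ∈ P} => shortcut E (wk x) (by simp [hwk]) (hwkch x)
    have g : Fin k ≃ {w // w ∈ P} := (finCongr hcard.symm).trans P.equivFin.symm
    refine ⟨fun j => Fl0 (g j), fun j => ⟨hFl1 _, hFl2 _, hFl3 _, ?_, ?_⟩, ?_⟩
    · rw [hFl4]; simp [hwk]
    · rw [hFl5]; exact hEL4 (g j)
    · intro e
      have hzip : ∀ x : {w // w ∈ P},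
          ((wk x).zip (wk x).tail) = (EL x).map (fun p => p.1) := by
        intro x
        have := walk_zip (EL x) s (hEL1 x) (hEL3 x)
        simpa [hwk] using this
      have hbound : ∀ x : {w // w ∈ P},
          (((Fl0 x).zip (Fl0 x).tail).count e)
            ≤ (((EL x).map (fun p => p.1)).count e) := by
        intro x
        have := hFl7 x e
        rwa [hzip x] at this
      -- the finsets of in-copies with edge e
      set S : Finset (VStar V k) := (Finset.range (cap e)).image
        (fun i => (Sum.inl ((e.2, e, i), false) : VStar V k)) with hS
      set F : {w // w ∈ P} → Finset (VStar V k) := fun x =>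
        (((EL x).filter (fun p => p.1 == e)).map (inCopy V k)).toFinset with hF
      have hndEL : ∀ x : {w // w ∈ P}, ((EL x).map (inCopy V k)).Nodup :=
        fun x => (hEL5 x).nodup (hprops x.1 x.2).2.2.1
      have hcardF : ∀ x : {w // w ∈ P},
          (((EL x).map (fun p => p.1)).count e) = (F x).card := by
        intro x
        rw [hF]
        rw [List.toFinset_card_of_nodup
          (((List.filter_sublist (l := EL x)).map (inCopy V k)).nodup (hndEL x))]
        rw [List.length_map]
        exact count_fst_eq_length_filter (EL x) e
      have hmemw : ∀ (x : {w // w ∈ P}) (u : VStar V k), u ∈ F x → u ∈ x.1 := by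
        intro x u hu
        rw [hF] at hu
        simp only [List.mem_toFinset, List.mem_map] at hu
        obtain ⟨p, hp, rfl⟩ := hu
        exact (hEL5 x).subset (List.mem_map_of_mem (List.mem_of_mem_filter hp))
      have hFdisj : ∀ x ∈ Finset.univ, ∀ y ∈ Finset.univ, x ≠ y →
          Disjoint (F x) (F y) := by
        intro x _ y _ hxy
        rw [Finset.disjoint_left]
        intro u hux huy
        exact hdisj x.1 x.2 y.1 y.2 (fun hh => hxy (Subtype.ext hh)) u
          (hmemw x u hux) (hmemw y u huy)
      have hsubS : Finset.univ.biUnion F ⊆ S := by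
        intro u hu
        simp only [Finset.mem_biUnion] at hu
        obtain ⟨x, -, hu⟩ := hu
        rw [hF] at hu
        simp only [List.mem_toFinset, List.mem_map] at hu
        obtain ⟨p, hp, rfl⟩ := hu
        have hpe : p.1 = e := by simpa using List.of_mem_filter hp
        have hpc : p.2 < cap p.1 := (hEL2 x p (List.mem_of_mem_filter hp)).2
        rw [hS, Finset.mem_image]
        exact ⟨p.2, Finset.mem_range.2 (hpe ▸ hpc), by simp [inCopy, hpe]⟩
      calc ∑ j : Fin k, ((Fl0 (g j)).zip (Fl0 (g j)).tail).count e
          ≤ ∑ j : Fin k, (F (g j)).card := by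
            refine Finset.sum_le_sum fun j _ => ?_
            rw [← hcardF (g j)]
            exact hbound (g j)
        _ = ∑ x : {w // w ∈ P}, (F x).card :=
            Equiv.sum_comp g (fun x => (F x).card)
        _ = (Finset.univ.biUnion F).card := (Finset.card_biUnion hFdisj).symm
        _ ≤ S.card := Finset.card_le_card hsubS
        _ ≤ (Finset.range (cap e)).card := hS ▸ Finset.card_image_le
        _ = cap e := Finset.card_range _


end
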